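/- (Lemma 1) The subgroup R_n of B_n generated by the full twist d and the flips r_1, …, r_n is a normal subgroup of B_n. -/

import Mathlib

namespace Braid

/-- Braid relations on generators indexed by `Fin m`; the generator `i : Fin m` stands for the
Artin generator `σ_{i+1}` of the braid group on `m+1` strands: the relations are
`σ_i σ_j = σ_j σ_i` for `|i-j| ≥ 2` and `σ_i σ_{i+1} σ_i = σ_{i+1} σ_i σ_{i+1}`. -/
def braidRels (m : ℕ) : Set (FreeGroup (Fin m)) :=
  {r | ∃ i j : Fin m, i.val + 2 ≤ j.val ∧
      r = .of i * .of j * (.of j * .of i)⁻¹} ∪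
  {r | ∃ (i : Fin m) (hij : i.val + 1 < m),
      r = .of i * .of ⟨i.val + 1, hij⟩ * .of i *
        (.of ⟨i.val + 1, hij⟩ * .of i * .of ⟨i.val + 1, hij⟩)⁻¹}

/-- The Artin braid group `B_n` on `n` strands, presented with generators `σ_1, …, σ_{n-1}`
and the braid relations. -/
def BraidGroup (n : ℕ) : Type := PresentedGroup (braidRels (n - 1))

instance (n : ℕ) : Group (BraidGroup n) := by unfold BraidGroup; infer_instance

/-- The Artin generator `σ_i` of `B_n`, for `1 ≤ i ≤ n-1` (junk value `1` otherwise). -/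
def σ (n : ℕ) (i : ℕ) : BraidGroup n :=
  if h : 1 ≤ i ∧ i ≤ n - 1 then PresentedGroup.of ⟨i - 1, by omega⟩ else 1

/-- The ascending product `σ_a σ_{a+1} ⋯ σ_b` (empty product if `b < a`). -/
def up (n a b : ℕ) : BraidGroup n := ((List.range' a (b + 1 - a)).map (σ n)).prod

/-- The descending product `σ_a σ_{a-1} ⋯ σ_b` (empty product if `a < b`). -/
def down (n a b : ℕ) : BraidGroup n :=
  ((List.range' b (a + 1 - b)).reverse.map (σ n)).prod

/-- The full twist `d = (σ_{n-1} ⋯ σ_2 σ_1)^n` of `B_n`. -/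
def fullTwist (n : ℕ) : BraidGroup n := (down n (n - 1) 1) ^ n

/-- The flip `r_i = σ_{i-1} ⋯ σ_2 σ_1^2 σ_2 ⋯ σ_{n-2} σ_{n-1}^2 σ_{n-2} ⋯ σ_i` of `B_n`
(for `1 ≤ i ≤ n`), written as `(σ_{i-1} ⋯ σ_1) (σ_1 ⋯ σ_{n-1}) (σ_{n-1} ⋯ σ_i)`. -/
def flip (n i : ℕ) : BraidGroup n :=
  down n (i - 1) 1 * up n 1 (n - 1) * down n (n - 1) i

/-- The descending product of flips `r_a r_{a-1} ⋯ r_b` (empty product if `a < b`). -/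
def flipsDown (n a b : ℕ) : BraidGroup n :=
  ((List.range' b (a + 1 - b)).reverse.map (flip n)).prod

/-- The subgroup `R_n ⊆ B_n` generated by the full twist `d` and the flips `r_1, …, r_n`. -/
def R (n : ℕ) : Subgroup (BraidGroup n) :=
  Subgroup.closure ({fullTwist n} ∪ flip n '' Set.Icc 1 n)

/-- The subgroup `R_n' ⊆ B_n` generated by the flips `r_1, …, r_n`. -/
def R' (n : ℕ) : Subgroup (BraidGroup n) :=
  Subgroup.closure (flip n '' Set.Icc 1 n)

private lemma swap_braid {n : ℕ} (a b c : Fin n) (hab : a ≠ b) (hbc : b ≠ c) (hac : a ≠ c) :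
    Equiv.swap a b * Equiv.swap b c * Equiv.swap a b
      = Equiv.swap b c * Equiv.swap a b * Equiv.swap b c := by
  have h1 : Equiv.swap b a * Equiv.swap c b * Equiv.swap b a = Equiv.swap a c :=
    Equiv.swap_mul_swap_mul_swap (Ne.symm hbc) hac.symm
  have h2 : Equiv.swap b c * Equiv.swap a b * Equiv.swap b c = Equiv.swap c a :=
    Equiv.swap_mul_swap_mul_swap hab hac
  rw [h2, Equiv.swap_comm a b, Equiv.swap_comm b c, h1, Equiv.swap_comm a c]

private lemma swap_commute {n : ℕ} (a b c d : Fin n)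
    (hac : a ≠ c) (had : a ≠ d) (hbc : b ≠ c) (hbd : b ≠ d) :
    Equiv.swap a b * Equiv.swap c d = Equiv.swap c d * Equiv.swap a b := by
  refine Equiv.Perm.Disjoint.commute ?_
  intro x
  by_cases h1 : x = a
  · subst h1; right; exact Equiv.swap_apply_of_ne_of_ne hac had
  · by_cases h2 : x = b
    · subst h2; right; exact Equiv.swap_apply_of_ne_of_ne hbc hbd
    · left; exact Equiv.swap_apply_of_ne_of_ne h1 h2

/-- The transposition `(i, i+1)` of `Fin n` associated to the generator `i : Fin (n-1)`. -/
def permGen (n : ℕ) (i : Fin (n - 1)) : Equiv.Perm (Fin n) :=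
  Equiv.swap ⟨i.val, by have := i.isLt; omega⟩ ⟨i.val + 1, by have := i.isLt; omega⟩

/-- The homomorphism `B_n → Sym(n)` sending `σ_i` to the transposition `(i, i+1)`. -/
def toPerm (n : ℕ) : BraidGroup n →* Equiv.Perm (Fin n) :=
  PresentedGroup.toGroup (f := permGen n)
    (by
      rintro r (⟨i, j, hij, rfl⟩ | ⟨i, hij, rfl⟩) <;>
        simp only [map_mul, map_inv, FreeGroup.lift_apply_of, permGen] <;> rw [mul_inv_eq_one]
      · refine swap_commute _ _ _ _ ?_ ?_ ?_ ?_ <;>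
          · rw [ne_eq, Fin.mk.injEq]; omega
      · refine swap_braid _ _ _ ?_ ?_ ?_ <;>
          · rw [ne_eq, Fin.mk.injEq]; omega)

/-- The pure braid group `P_n`: the kernel of `B_n → Sym(n)`, `σ_i ↦ (i, i+1)`. -/
def P (n : ℕ) : Subgroup (BraidGroup n) := (toPerm n).ker

private lemma mk_rel_eq_one {m : ℕ} {r : FreeGroup (Fin m)} (h : r ∈ braidRels m) :
    PresentedGroup.mk (braidRels m) r = 1 :=
  (QuotientGroup.eq_one_iff _).mpr (Subgroup.subset_normalClosure h)

lemma σ_comm {n i j : ℕ} (h1 : 1 ≤ i) (h2 : i + 2 ≤ j) (h3 : j ≤ n - 1) :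
    σ n i * σ n j = σ n j * σ n i := by
  rw [show σ n i = (PresentedGroup.of ⟨i - 1, by omega⟩ : BraidGroup n) from
      dif_pos ⟨h1, by omega⟩,
    show σ n j = (PresentedGroup.of ⟨j - 1, by omega⟩ : BraidGroup n) from
      dif_pos ⟨by omega, h3⟩]
  have hmem : (FreeGroup.of (⟨i - 1, by omega⟩ : Fin (n-1)) * .of ⟨j - 1, by omega⟩ *
      (.of ⟨j - 1, by omega⟩ * .of ⟨i - 1, by omega⟩)⁻¹) ∈ braidRels (n - 1) :=
    Or.inl ⟨⟨i - 1, by omega⟩, ⟨j - 1, by omega⟩, by show i - 1 + 2 ≤ j - 1; omega, rfl⟩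
  have h := mk_rel_eq_one hmem
  rw [map_mul, map_inv, mul_inv_eq_one, map_mul, map_mul] at h
  exact h

set_option maxHeartbeats 1600000 in
lemma σ_braid {n i : ℕ} (h1 : 1 ≤ i) (h2 : i + 1 ≤ n - 1) :
    σ n i * σ n (i + 1) * σ n i = σ n (i + 1) * σ n i * σ n (i + 1) := by
  rw [show σ n i = (PresentedGroup.of ⟨i - 1, by omega⟩ : BraidGroup n) from
      dif_pos ⟨h1, by omega⟩,
    show σ n (i + 1) = (PresentedGroup.of ⟨i + 1 - 1, by omega⟩ : BraidGroup n) from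
      dif_pos ⟨by omega, h2⟩]
  have key : (⟨i + 1 - 1, by omega⟩ : Fin (n - 1)) = ⟨(i - 1) + 1, by omega⟩ := by
    rw [Fin.mk.injEq]; omega
  rw [key]
  have hmem : (FreeGroup.of (⟨i - 1, by omega⟩ : Fin (n-1)) * .of ⟨(i-1) + 1, by omega⟩ *
      .of ⟨i - 1, by omega⟩ *
      (.of ⟨(i-1) + 1, by omega⟩ * .of ⟨i - 1, by omega⟩ * .of ⟨(i-1)+1, by omega⟩)⁻¹)
      ∈ braidRels (n - 1) :=
    Or.inr ⟨⟨i - 1, by omega⟩, by show i - 1 + 1 < n - 1; omega, rfl⟩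
  have h := mk_rel_eq_one hmem
  rw [map_mul, map_inv, mul_inv_eq_one, map_mul, map_mul, map_mul, map_mul] at h
  exact h

/-- The canonical homomorphism `ι : B_{n-1} → B_n` determined by `σ_i ↦ σ_i`. -/
def ι (n : ℕ) : BraidGroup (n - 1) →* BraidGroup n :=
  PresentedGroup.toGroup (f := fun i : Fin (n - 1 - 1) => σ n (i.val + 1))
    (by
      rintro r (⟨i, j, hij, rfl⟩ | ⟨i, hij, rfl⟩) <;>
        simp only [map_mul, map_inv, FreeGroup.lift_apply_of] <;> rw [mul_inv_eq_one]
      · exact σ_comm (by omega) (by omega) (by have := j.isLt; omega)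
      · exact σ_braid (by omega) (by have := i.isLt; omega))




/-! ### Auxiliary machinery for Lemma 1 -/

section Aux

variable {n : ℕ}

private lemma σ_zero : σ n 0 = 1 := by
  exact dif_neg (by omega)

private lemma σ_out {i : ℕ} (h : n - 1 < i) : σ n i = 1 := by
  exact dif_neg (by omega)

private lemma up_empty {a b : ℕ} (h : b < a) : up n a b = 1 := by
  unfold up
  rw [show b + 1 - a = 0 by omega]
  simp

private lemma down_empty {a b : ℕ} (h : a < b) : down n a b = 1 := by
  unfold down
  rw [show a + 1 - b = 0 by omega]
  simp

private lemma up_cons {a b : ℕ} (h : a ≤ b) : up n a b = σ n a * up n (a + 1) b := by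
  unfold up
  rw [show b + 1 - a = (b - a) + 1 by omega, List.range'_succ]
  rw [show b + 1 - (a + 1) = b - a by omega]
  simp

private lemma up_snoc {a b : ℕ} (ha : 1 ≤ a) (h : a ≤ b) :
    up n a b = up n a (b - 1) * σ n b := by
  unfold up
  rw [show b + 1 - a = (b - a) + 1 by omega, List.range'_concat]
  rw [show b - 1 + 1 - a = b - a by omega]
  rw [show a + 1 * (b - a) = b by omega]
  simp

private lemma down_cons {a b : ℕ} (hb : 1 ≤ b) (h : b ≤ a) :
    down n a b = σ n a * down n (a - 1) b := by
  unfold down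
  rw [show a + 1 - b = (a - b) + 1 by omega, List.range'_concat]
  rw [show a - 1 + 1 - b = a - b by omega]
  rw [show b + 1 * (a - b) = a by omega]
  simp

private lemma down_snoc {a b : ℕ} (h : b ≤ a) :
    down n a b = down n a (b + 1) * σ n b := by
  unfold down
  rw [show a + 1 - b = (a - b) + 1 by omega, List.range'_succ]
  rw [show a + 1 - (b + 1) = a - b by omega]
  simp [mul_comm]

private lemma up_split {a b c : ℕ} (h1 : a ≤ c + 1) (h2 : c ≤ b) :
    up n a b = up n a c * up n (c + 1) b := by
  unfold up
  rw [show b + 1 - a = (c + 1 - a) + (b + 1 - (c + 1)) by omega,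
    ← List.range'_append (s := a) (m := c + 1 - a) (n := b + 1 - (c + 1)) (step := 1),
    show a + 1 * (c + 1 - a) = c + 1 by omega]
  simp

private lemma σ_comm' {i j : ℕ} (h : i + 2 ≤ j) : Commute (σ n i) (σ n j) := by
  by_cases h1 : 1 ≤ i
  · by_cases h2 : j ≤ n - 1
    · exact σ_comm h1 h h2
    · rw [σ_out (by omega : n - 1 < j)]; exact Commute.one_right _
  · rw [show i = 0 by omega, σ_zero]; exact Commute.one_left _

private lemma commute_down {a b : ℕ} {x : BraidGroup n}
    (h : ∀ k, b ≤ k → k ≤ a → Commute x (σ n k)) : Commute x (down n a b) := by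
  unfold down
  apply Commute.list_prod_right
  intro y hy
  simp only [List.mem_map, List.mem_reverse, List.mem_range'] at hy
  obtain ⟨k, ⟨i0, hi0, rfl⟩, rfl⟩ := hy
  exact h _ (by omega) (by omega)

private lemma commute_up {a b : ℕ} {x : BraidGroup n}
    (h : ∀ k, a ≤ k → k ≤ b → Commute x (σ n k)) : Commute x (up n a b) := by
  unfold up
  apply Commute.list_prod_right
  intro y hy
  simp only [List.mem_map, List.mem_range'] at hy
  obtain ⟨k, ⟨i0, hi0, rfl⟩, rfl⟩ := hy
  exact h _ (by omega) (by omega)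

private lemma shift_down {j b : ℕ} (h1 : 1 ≤ b) (h2 : b ≤ j) :
    ∀ a, j + 1 ≤ a → a ≤ n - 1 → σ n j * down n a b = down n a b * σ n (j + 1) := by
  intro a
  induction a with
  | zero => omega
  | succ a ih =>
    intro ha1 ha2
    rw [down_cons h1 (by omega : b ≤ a + 1), show a + 1 - 1 = a by omega]
    by_cases hj : j = a
    · subst hj
      rw [down_cons h1 (by omega : b ≤ j)]
      have hbr := σ_braid (by omega : 1 ≤ j) (by omega : j + 1 ≤ n - 1)
      have hc : Commute (σ n (j + 1)) (down n (j - 1) b) :=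
        commute_down (fun k hk1 hk2 => (σ_comm' (by omega)).symm)
      calc σ n j * (σ n (j + 1) * (σ n j * down n (j - 1) b))
          = (σ n j * σ n (j + 1) * σ n j) * down n (j - 1) b := by group
        _ = (σ n (j + 1) * σ n j * σ n (j + 1)) * down n (j - 1) b := by rw [hbr]
        _ = (σ n (j + 1) * σ n j) * (σ n (j + 1) * down n (j - 1) b) := by group
        _ = (σ n (j + 1) * σ n j) * (down n (j - 1) b * σ n (j + 1)) := by rw [hc.eq]
        _ = σ n (j + 1) * (σ n j * down n (j - 1) b) * σ n (j + 1) := by group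
    · have hcomm : Commute (σ n j) (σ n (a + 1)) := σ_comm' (by omega)
      calc σ n j * (σ n (a + 1) * down n a b)
          = σ n (a + 1) * (σ n j * down n a b) := by
            rw [← mul_assoc, hcomm.eq, mul_assoc]
        _ = σ n (a + 1) * (down n a b * σ n (j + 1)) := by
            rw [ih (by omega) (by omega)]
        _ = σ n (a + 1) * down n a b * σ n (j + 1) := by group

private lemma shift_up {j a : ℕ} (h1 : 1 ≤ a) (h2 : a ≤ j) :
    ∀ b, j + 1 ≤ b → b ≤ n - 1 → σ n (j + 1) * up n a b = up n a b * σ n j := by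
  intro b
  induction b with
  | zero => omega
  | succ b ih =>
    intro hb1 hb2
    rw [up_snoc h1 (by omega : a ≤ b + 1), show b + 1 - 1 = b by omega]
    by_cases hj : j = b
    · subst hj
      rw [up_snoc h1 (h2 : a ≤ j)]
      have hbr := σ_braid (by omega : 1 ≤ j) (by omega : j + 1 ≤ n - 1)
      have hc : Commute (σ n (j + 1)) (up n a (j - 1)) :=
        commute_up (fun k hk1 hk2 => (σ_comm' (by omega)).symm)
      calc σ n (j + 1) * (up n a (j - 1) * σ n j * σ n (j + 1))
          = (σ n (j + 1) * up n a (j - 1)) * (σ n j * σ n (j + 1)) := by group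
        _ = (up n a (j - 1) * σ n (j + 1)) * (σ n j * σ n (j + 1)) := by rw [hc.eq]
        _ = up n a (j - 1) * (σ n (j + 1) * σ n j * σ n (j + 1)) := by group
        _ = up n a (j - 1) * (σ n j * σ n (j + 1) * σ n j) := by rw [← hbr]
        _ = up n a (j - 1) * σ n j * σ n (j + 1) * σ n j := by group
    · calc σ n (j + 1) * (up n a b * σ n (b + 1))
          = (σ n (j + 1) * up n a b) * σ n (b + 1) := by group
        _ = (up n a b * σ n j) * σ n (b + 1) := by rw [ih (by omega) (by omega)]
        _ = up n a b * (σ n j * σ n (b + 1)) := by group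
        _ = up n a b * (σ n (b + 1) * σ n j) := by
            rw [(σ_comm' (by omega : j + 2 ≤ b + 1)).eq]
        _ = up n a b * σ n (b + 1) * σ n j := by group

/-- Abstract key step for the coil-square commutation inductions. -/
private lemma key_step {G : Type*} [Group G] {a b V : G} (hVb : V * b = b * V)
    (hbr : a * b * a = b * a * b) (hIH : a * (V * a * (V * a)) = V * a * (V * a) * a) :
    b * (a * V * a * b * (a * V * a * b)) = a * V * a * b * (a * V * a * b) * b := by
  have h1 : a * V * (a * V) = V * a * (V * a) := by
    apply mul_right_cancel (b := a)
    calc a * V * (a * V) * a = a * (V * a * (V * a)) := by group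
      _ = V * a * (V * a) * a := hIH
  calc b * (a * V * a * b * (a * V * a * b))
      = (b * a * V) * (a * b * a) * (V * a * b) := by group
    _ = (b * a * V) * (b * a * b) * (V * a * b) := by rw [hbr]
    _ = (b * a) * (V * b) * (a * b) * (V * a * b) := by group
    _ = (b * a) * (b * V) * (a * b) * (V * a * b) := by rw [hVb]
    _ = (b * a * b * V * a) * (b * V) * (a * b) := by group
    _ = (b * a * b * V * a) * (V * b) * (a * b) := by rw [← hVb]
    _ = (b * a * b) * (V * a * V) * (b * a * b) := by group
    _ = (a * b * a) * (V * a * V) * (a * b * a) := by rw [← hbr]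
    _ = (a * b) * (a * V * (a * V)) * (a * b * a) := by group
    _ = (a * b) * (a * V * (a * V)) * (b * a * b) := by rw [hbr]
    _ = (a * b) * (V * a * (V * a)) * (b * a * b) := by rw [h1]
    _ = (a * b) * (V * a * V) * (a * b * a) * b := by group
    _ = (a * b) * (V * a * V) * (b * a * b) * b := by rw [hbr]
    _ = (a * b * V * a) * (V * b) * (a * b * b) := by group
    _ = (a * b * V * a) * (b * V) * (a * b * b) := by rw [hVb]
    _ = a * (b * V) * (a * b) * (V * a) * (b * b) := by group
    _ = a * (V * b) * (a * b) * (V * a) * (b * b) := by rw [← hVb]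
    _ = (a * V) * (b * a * b) * (V * a) * (b * b) := by group
    _ = (a * V) * (a * b * a) * (V * a) * (b * b) := by rw [← hbr]
    _ = a * V * a * b * (a * V * a * b) * b := by group

/-- Abstract key step for the `δ²`-shift induction. -/
private lemma key_step2 {G : Type*} [Group G] {a b V c : G} (hVb : V * b = b * V)
    (hbr : a * b * a = b * a * b) (hIH : a * (a * V * (a * V)) = a * V * (a * V) * c) :
    b * (b * (a * V) * (b * (a * V))) = b * (a * V) * (b * (a * V)) * c := by
  have h1 : a * V * (a * V) = V * (a * V) * c := by
    apply mul_left_cancel (a := a)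
    calc a * (a * V * (a * V)) = a * V * (a * V) * c := hIH
      _ = a * (V * (a * V) * c) := by group
  calc b * (b * (a * V) * (b * (a * V)))
      = (b * b * a) * (V * b) * (a * V) := by group
    _ = (b * b * a) * (b * V) * (a * V) := by rw [hVb]
    _ = b * (b * a * b) * (V * a * V) := by group
    _ = b * (a * b * a) * (V * a * V) := by rw [← hbr]
    _ = (b * a * b) * (a * V * (a * V)) := by group
    _ = (b * a * b) * (V * (a * V) * c) := by rw [h1]
    _ = (b * a) * (b * V) * (a * V) * c := by group
    _ = (b * a) * (V * b) * (a * V) * c := by rw [← hVb]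
    _ = b * (a * V) * (b * (a * V)) * c := by group

private lemma sq_shift :
    ∀ m, 1 ≤ m → m ≤ n - 1 →
      σ n m * (down n m 1 * down n m 1) = down n m 1 * down n m 1 * σ n 1 := by
  intro m hm
  induction m, hm using Nat.le_induction with
  | base =>
    intro _
    rw [down_cons le_rfl le_rfl, show (1 : ℕ) - 1 = 0 by omega, down_empty (by omega)]
    group
  | succ m hm ih =>
    intro hm2
    have hVb : down n (m - 1) 1 * σ n (m + 1) = σ n (m + 1) * down n (m - 1) 1 :=
      (commute_down (fun k hk1 hk2 => (σ_comm' (by omega)).symm)).symm.eq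
    have hbr := σ_braid hm hm2
    have hIH := ih (by omega)
    rw [down_cons le_rfl hm] at hIH
    have hD : down n (m + 1) 1 = σ n (m + 1) * (σ n m * down n (m - 1) 1) := by
      rw [down_cons le_rfl (by omega : 1 ≤ m + 1), show m + 1 - 1 = m by omega,
        down_cons le_rfl hm]
    rw [hD]
    exact key_step2 hVb hbr hIH

private lemma delta_shift {j : ℕ} (h1 : 1 ≤ j) (h2 : j ≤ n - 2) :
    σ n j * down n (n - 1) 1 = down n (n - 1) 1 * σ n (j + 1) :=
  shift_down le_rfl h1 (n - 1) (by omega) le_rfl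

private lemma delta_pow :
    ∀ k, 2 ≤ k → k ≤ n - 1 →
      σ n (n - 1) * (down n (n - 1) 1) ^ k = (down n (n - 1) 1) ^ k * σ n (k - 1) := by
  intro k hk
  induction k, hk using Nat.le_induction with
  | base =>
    intro h2
    rw [show (2 : ℕ) - 1 = 1 by omega, pow_two]
    exact sq_shift (n - 1) (by omega) le_rfl
  | succ k hk ih =>
    intro hk2
    have hs : σ n (k - 1) * down n (n - 1) 1 = down n (n - 1) 1 * σ n k := by
      have := delta_shift (n := n) (j := k - 1) (by omega) (by omega)
      rwa [show k - 1 + 1 = k by omega] at this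
    rw [show k + 1 - 1 = k by omega, pow_succ]
    calc σ n (n - 1) * (down n (n - 1) 1 ^ k * down n (n - 1) 1)
        = (σ n (n - 1) * down n (n - 1) 1 ^ k) * down n (n - 1) 1 := by group
      _ = (down n (n - 1) 1 ^ k * σ n (k - 1)) * down n (n - 1) 1 := by rw [ih (by omega)]
      _ = down n (n - 1) 1 ^ k * (σ n (k - 1) * down n (n - 1) 1) := by group
      _ = down n (n - 1) 1 ^ k * (down n (n - 1) 1 * σ n k) := by rw [hs]
      _ = down n (n - 1) 1 ^ k * down n (n - 1) 1 * σ n k := by group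

private lemma d_comm_sigma :
    ∀ t j, 1 ≤ j → j ≤ n - 1 → n - 1 - j = t →
      σ n j * fullTwist n = fullTwist n * σ n j := by
  intro t
  induction t with
  | zero =>
    intro j hj1 hj2 ht
    have hj : j = n - 1 := by omega
    subst hj
    unfold fullTwist
    by_cases hn3 : 3 ≤ n
    · have h1 := delta_pow (n := n) (n - 1) (by omega) le_rfl
      have hpow : (down n (n - 1) 1) ^ ((n - 1) + 1) = (down n (n - 1) 1) ^ n := by
        rw [show n - 1 + 1 = n by omega]
      rw [← hpow, pow_succ]
      have hs : σ n (n - 1 - 1) * down n (n - 1) 1 = down n (n - 1) 1 * σ n (n - 1) := by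
        have := delta_shift (n := n) (j := n - 2) (by omega) le_rfl
        rwa [show n - 2 + 1 = n - 1 by omega, show n - 2 = n - 1 - 1 by omega] at this
      calc σ n (n - 1) * (down n (n - 1) 1 ^ (n - 1) * down n (n - 1) 1)
          = (σ n (n - 1) * down n (n - 1) 1 ^ (n - 1)) * down n (n - 1) 1 := by group
        _ = (down n (n - 1) 1 ^ (n - 1) * σ n (n - 1 - 1)) * down n (n - 1) 1 := by rw [h1]
        _ = down n (n - 1) 1 ^ (n - 1) * (σ n (n - 1 - 1) * down n (n - 1) 1) := by group
        _ = down n (n - 1) 1 ^ (n - 1) * (down n (n - 1) 1 * σ n (n - 1)) := by rw [hs]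
        _ = down n (n - 1) 1 ^ (n - 1) * down n (n - 1) 1 * σ n (n - 1) := by group
    · by_cases hn2 : n = 2
      · subst hn2
        rw [down_cons le_rfl le_rfl, show (1 : ℕ) - 1 = 0 by omega, down_empty (by omega),
          mul_one]
        exact ((Commute.refl (σ 2 1)).pow_right 2).eq.symm
      · omega
  | succ t ih =>
    intro j hj1 hj2 ht
    have hj : j ≤ n - 2 := by omega
    apply mul_right_cancel (b := down n (n - 1) 1)
    have hcd : fullTwist n * down n (n - 1) 1 = down n (n - 1) 1 * fullTwist n := by
      unfold fullTwist
      exact ((Commute.refl (down n (n - 1) 1)).pow_left n).eq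
    calc σ n j * fullTwist n * down n (n - 1) 1
        = σ n j * (fullTwist n * down n (n - 1) 1) := by group
      _ = σ n j * (down n (n - 1) 1 * fullTwist n) := by rw [hcd]
      _ = (σ n j * down n (n - 1) 1) * fullTwist n := by group
      _ = (down n (n - 1) 1 * σ n (j + 1)) * fullTwist n := by rw [delta_shift hj1 hj]
      _ = down n (n - 1) 1 * (σ n (j + 1) * fullTwist n) := by group
      _ = down n (n - 1) 1 * (fullTwist n * σ n (j + 1)) := by
          rw [ih (j + 1) (by omega) (by omega) (by omega)]
      _ = (down n (n - 1) 1 * fullTwist n) * σ n (j + 1) := by group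
      _ = (fullTwist n * down n (n - 1) 1) * σ n (j + 1) := by rw [hcd]
      _ = fullTwist n * (down n (n - 1) 1 * σ n (j + 1)) := by group
      _ = fullTwist n * (σ n j * down n (n - 1) 1) := by rw [delta_shift hj1 hj]
      _ = fullTwist n * σ n j * down n (n - 1) 1 := by group

private lemma flip_succ {i : ℕ} (h1 : 1 ≤ i) (h2 : i ≤ n - 1) :
    σ n i * flip n i = flip n (i + 1) * σ n i := by
  unfold flip
  rw [show i + 1 - 1 = i by omega]
  rw [down_snoc (b := i) h2]
  rw [down_cons (a := i) le_rfl h1]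
  group

private lemma flip_comm_low {i j : ℕ} (hj : 1 ≤ j) (hij : j + 2 ≤ i) (hi : i ≤ n) :
    Commute (σ n j) (flip n i) := by
  unfold flip
  show σ n j * _ = _ * σ n j
  have hD : σ n j * down n (i - 1) 1 = down n (i - 1) 1 * σ n (j + 1) :=
    shift_down le_rfl hj (i - 1) (by omega) (by omega)
  have hu : σ n (j + 1) * up n 1 (n - 1) = up n 1 (n - 1) * σ n j :=
    shift_up le_rfl hj (n - 1) (by omega) le_rfl
  have hE : Commute (σ n j) (down n (n - 1) i) :=
    commute_down (fun k hk1 hk2 => σ_comm' (by omega))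
  calc σ n j * (down n (i - 1) 1 * up n 1 (n - 1) * down n (n - 1) i)
      = (σ n j * down n (i - 1) 1) * up n 1 (n - 1) * down n (n - 1) i := by group
    _ = down n (i - 1) 1 * (σ n (j + 1) * up n 1 (n - 1)) * down n (n - 1) i := by
        rw [hD]; group
    _ = down n (i - 1) 1 * (up n 1 (n - 1) * σ n j) * down n (n - 1) i := by rw [hu]
    _ = down n (i - 1) 1 * up n 1 (n - 1) * (σ n j * down n (n - 1) i) := by group
    _ = down n (i - 1) 1 * up n 1 (n - 1) * (down n (n - 1) i * σ n j) := by rw [hE.eq]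
    _ = down n (i - 1) 1 * up n 1 (n - 1) * down n (n - 1) i * σ n j := by group

private lemma flip_comm_high {i j : ℕ} (hi : 1 ≤ i) (hij : i + 1 ≤ j) (hj : j ≤ n - 1) :
    Commute (σ n j) (flip n i) := by
  unfold flip
  show σ n j * _ = _ * σ n j
  have hD : Commute (σ n j) (down n (i - 1) 1) :=
    commute_down (fun k hk1 hk2 => (σ_comm' (by omega)).symm)
  have hu : σ n j * up n 1 (n - 1) = up n 1 (n - 1) * σ n (j - 1) := by
    have := shift_up (n := n) (j := j - 1) (a := 1) le_rfl (by omega) (n - 1) (by omega) le_rfl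
    rwa [show j - 1 + 1 = j by omega] at this
  have hE : σ n (j - 1) * down n (n - 1) i = down n (n - 1) i * σ n j := by
    have := shift_down (n := n) (j := j - 1) (b := i) hi (by omega) (n - 1) (by omega) le_rfl
    rwa [show j - 1 + 1 = j by omega] at this
  calc σ n j * (down n (i - 1) 1 * up n 1 (n - 1) * down n (n - 1) i)
      = (σ n j * down n (i - 1) 1) * up n 1 (n - 1) * down n (n - 1) i := by group
    _ = down n (i - 1) 1 * (σ n j * up n 1 (n - 1)) * down n (n - 1) i := by
        rw [hD.eq]; group
    _ = down n (i - 1) 1 * (up n 1 (n - 1) * σ n (j - 1)) * down n (n - 1) i := by rw [hu]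
    _ = down n (i - 1) 1 * up n 1 (n - 1) * (σ n (j - 1) * down n (n - 1) i) := by group
    _ = down n (i - 1) 1 * up n 1 (n - 1) * (down n (n - 1) i * σ n j) := by rw [hE]
    _ = down n (i - 1) 1 * up n 1 (n - 1) * down n (n - 1) i * σ n j := by group

private lemma W_comm :
    ∀ i, 1 ≤ i → i ≤ n - 1 →
      σ n i * (down n (i - 1) 1 * up n 1 i * (down n (i - 1) 1 * up n 1 i)) =
        down n (i - 1) 1 * up n 1 i * (down n (i - 1) 1 * up n 1 i) * σ n i := by
  intro i hi
  induction i, hi using Nat.le_induction with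
  | base =>
    intro _
    rw [show (1 : ℕ) - 1 = 0 by omega, down_empty (by omega),
      up_cons le_rfl, up_empty (by omega)]
    group
  | succ i hi ih =>
    intro hi2
    have hVb : (down n (i - 1) 1 * up n 1 (i - 1)) * σ n (i + 1) =
        σ n (i + 1) * (down n (i - 1) 1 * up n 1 (i - 1)) := by
      have hc : Commute (σ n (i + 1)) (down n (i - 1) 1 * up n 1 (i - 1)) :=
        (commute_down (fun k hk1 hk2 => (σ_comm' (by omega)).symm)).mul_right
          (commute_up (fun k hk1 hk2 => (σ_comm' (by omega)).symm))
      exact hc.symm.eq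
    have hbr := σ_braid hi hi2
    have hW : down n (i + 1 - 1) 1 * up n 1 (i + 1) =
        σ n i * (down n (i - 1) 1 * up n 1 (i - 1)) * σ n i * σ n (i + 1) := by
      rw [show i + 1 - 1 = i by omega, down_cons le_rfl hi,
        up_snoc le_rfl (by omega : 1 ≤ i + 1), show i + 1 - 1 = i by omega,
        up_snoc le_rfl hi]
      group
    have hIH : σ n i * ((down n (i - 1) 1 * up n 1 (i - 1)) * σ n i *
          ((down n (i - 1) 1 * up n 1 (i - 1)) * σ n i)) =
        (down n (i - 1) 1 * up n 1 (i - 1)) * σ n i *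
          ((down n (i - 1) 1 * up n 1 (i - 1)) * σ n i) * σ n i := by
      have h0 := ih (by omega)
      rw [up_snoc le_rfl hi] at h0
      calc σ n i * ((down n (i - 1) 1 * up n 1 (i - 1)) * σ n i *
            ((down n (i - 1) 1 * up n 1 (i - 1)) * σ n i))
          = σ n i * (down n (i - 1) 1 * (up n 1 (i - 1) * σ n i) *
            (down n (i - 1) 1 * (up n 1 (i - 1) * σ n i))) := by group
        _ = down n (i - 1) 1 * (up n 1 (i - 1) * σ n i) *
            (down n (i - 1) 1 * (up n 1 (i - 1) * σ n i)) * σ n i := h0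
        _ = (down n (i - 1) 1 * up n 1 (i - 1)) * σ n i *
            ((down n (i - 1) 1 * up n 1 (i - 1)) * σ n i) * σ n i := by group
    rw [hW]
    exact key_step hVb hbr hIH

private lemma Y_comm :
    ∀ t i, 1 ≤ i → i ≤ n - 1 → n - 1 - i = t →
      σ n i * (up n (i + 1) (n - 1) * down n (n - 1) i *
          (up n (i + 1) (n - 1) * down n (n - 1) i)) =
        up n (i + 1) (n - 1) * down n (n - 1) i *
          (up n (i + 1) (n - 1) * down n (n - 1) i) * σ n i := by
  intro t
  induction t with
  | zero =>
    intro i hi1 hi2 ht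
    have hi : i = n - 1 := by omega
    subst hi
    rw [up_empty (by omega), down_cons hi1 le_rfl, down_empty (by omega)]
    group
  | succ t ih =>
    intro i hi1 hi2 ht
    have hin : i + 1 ≤ n - 1 := by omega
    have hVb : (up n (i + 2) (n - 1) * down n (n - 1) (i + 2)) * σ n i =
        σ n i * (up n (i + 2) (n - 1) * down n (n - 1) (i + 2)) := by
      have hc : Commute (σ n i) (up n (i + 2) (n - 1) * down n (n - 1) (i + 2)) :=
        (commute_up (fun k hk1 hk2 => σ_comm' (by omega))).mul_right
          (commute_down (fun k hk1 hk2 => σ_comm' (by omega)))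
      exact hc.symm.eq
    have hbr : σ n (i + 1) * σ n i * σ n (i + 1) = σ n i * σ n (i + 1) * σ n i :=
      (σ_braid hi1 hin).symm
    have hY : up n (i + 1) (n - 1) * down n (n - 1) i =
        σ n (i + 1) * (up n (i + 2) (n - 1) * down n (n - 1) (i + 2)) * σ n (i + 1) *
          σ n i := by
      rw [up_cons (by omega : i + 1 ≤ n - 1), down_snoc (by omega : i ≤ n - 1),
        down_snoc (by omega : i + 1 ≤ n - 1), show i + 1 + 1 = i + 2 by omega]
      group
    have hIH : σ n (i + 1) * ((up n (i + 2) (n - 1) * down n (n - 1) (i + 2)) * σ n (i + 1) *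
          ((up n (i + 2) (n - 1) * down n (n - 1) (i + 2)) * σ n (i + 1))) =
        (up n (i + 2) (n - 1) * down n (n - 1) (i + 2)) * σ n (i + 1) *
          ((up n (i + 2) (n - 1) * down n (n - 1) (i + 2)) * σ n (i + 1)) * σ n (i + 1) := by
      have h0 := ih (i + 1) (by omega) hin (by omega)
      rw [down_snoc (by omega : i + 1 ≤ n - 1), show i + 1 + 1 = i + 2 by omega] at h0
      calc σ n (i + 1) * ((up n (i + 2) (n - 1) * down n (n - 1) (i + 2)) * σ n (i + 1) *
            ((up n (i + 2) (n - 1) * down n (n - 1) (i + 2)) * σ n (i + 1)))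
          = σ n (i + 1) * (up n (i + 2) (n - 1) * (down n (n - 1) (i + 2) * σ n (i + 1)) *
            (up n (i + 2) (n - 1) * (down n (n - 1) (i + 2) * σ n (i + 1)))) := by group
        _ = up n (i + 2) (n - 1) * (down n (n - 1) (i + 2) * σ n (i + 1)) *
            (up n (i + 2) (n - 1) * (down n (n - 1) (i + 2) * σ n (i + 1))) * σ n (i + 1) :=
            h0
        _ = (up n (i + 2) (n - 1) * down n (n - 1) (i + 2)) * σ n (i + 1) *
            ((up n (i + 2) (n - 1) * down n (n - 1) (i + 2)) * σ n (i + 1)) * σ n (i + 1) := by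
            group
    rw [hY]
    exact key_step hVb hbr hIH

private lemma flip_eq {i : ℕ} (h1 : 1 ≤ i) (h2 : i ≤ n) :
    flip n i = (down n (i - 1) 1 * up n 1 (i - 1)) * (up n i (n - 1) * down n (n - 1) i) := by
  unfold flip
  rw [up_split (a := 1) (b := n - 1) (c := i - 1) (by omega) (by omega),
    show i - 1 + 1 = i by omega]
  group

private lemma flip_mul_comm {i : ℕ} (h1 : 1 ≤ i) (h2 : i ≤ n - 1) :
    Commute (σ n i) (flip n (i + 1) * flip n i) := by
  have hS : down n (i + 1 - 1) 1 * up n 1 (i + 1 - 1) =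
      σ n i * (down n (i - 1) 1 * up n 1 (i - 1)) * σ n i := by
    rw [show i + 1 - 1 = i by omega, down_cons le_rfl h1, up_snoc le_rfl h1]
    group
  have hT : up n i (n - 1) * down n (n - 1) i =
      σ n i * (up n (i + 1) (n - 1) * down n (n - 1) (i + 1)) * σ n i := by
    rw [up_cons h2, down_snoc h2]
    group
  have hST : Commute (down n (i - 1) 1 * up n 1 (i - 1))
      (up n (i + 1) (n - 1) * down n (n - 1) (i + 1)) := by
    have h9 : ∀ k, i + 1 ≤ k → k ≤ n - 1 →
        Commute (down n (i - 1) 1 * up n 1 (i - 1)) (σ n k) := by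
      intro k hk1 hk2
      have hd : Commute (σ n k) (down n (i - 1) 1) :=
        commute_down (fun m hm1 hm2 => (σ_comm' (by omega)).symm)
      have hu2 : Commute (σ n k) (up n 1 (i - 1)) :=
        commute_up (fun m hm1 hm2 => (σ_comm' (by omega)).symm)
      exact hd.symm.mul_left hu2.symm
    exact (commute_up (fun k hk1 hk2 => h9 k hk1 hk2)).mul_right
      (commute_down (fun k hk1 hk2 => h9 k hk1 hk2))
  have hWc := W_comm i h1 h2
  have hYc := Y_comm (n - 1 - i) i h1 h2 rfl
  have hWW : σ n i * (down n (i - 1) 1 * up n 1 (i - 1)) * σ n i *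
        (down n (i - 1) 1 * up n 1 (i - 1)) =
      down n (i - 1) 1 * up n 1 i * (down n (i - 1) 1 * up n 1 i) := by
    apply mul_right_cancel (b := σ n i)
    rw [hWc.symm, up_snoc le_rfl h1]
    group
  have hfact : flip n (i + 1) * flip n i =
      (down n (i - 1) 1 * up n 1 i * (down n (i - 1) 1 * up n 1 i)) *
        (up n (i + 1) (n - 1) * down n (n - 1) i *
          (up n (i + 1) (n - 1) * down n (n - 1) i)) := by
    rw [flip_eq (by omega) (by omega), flip_eq h1 (by omega)]
    rw [hS, hT]
    rw [down_snoc (b := i) h2]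
    calc σ n i * (down n (i - 1) 1 * up n 1 (i - 1)) * σ n i *
          (up n (i + 1) (n - 1) * down n (n - 1) (i + 1)) *
          (down n (i - 1) 1 * up n 1 (i - 1) *
            (σ n i * (up n (i + 1) (n - 1) * down n (n - 1) (i + 1)) * σ n i))
        = σ n i * (down n (i - 1) 1 * up n 1 (i - 1)) * σ n i *
          ((up n (i + 1) (n - 1) * down n (n - 1) (i + 1)) *
            (down n (i - 1) 1 * up n 1 (i - 1))) *
          (σ n i * (up n (i + 1) (n - 1) * down n (n - 1) (i + 1)) * σ n i) := by group
      _ = σ n i * (down n (i - 1) 1 * up n 1 (i - 1)) * σ n i *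
          ((down n (i - 1) 1 * up n 1 (i - 1)) *
            (up n (i + 1) (n - 1) * down n (n - 1) (i + 1))) *
          (σ n i * (up n (i + 1) (n - 1) * down n (n - 1) (i + 1)) * σ n i) := by
          rw [hST.symm.eq]
      _ = (σ n i * (down n (i - 1) 1 * up n 1 (i - 1)) * σ n i *
            (down n (i - 1) 1 * up n 1 (i - 1))) *
          ((up n (i + 1) (n - 1) * (down n (n - 1) (i + 1) * σ n i)) *
            (up n (i + 1) (n - 1) * (down n (n - 1) (i + 1) * σ n i))) := by group
      _ = (down n (i - 1) 1 * up n 1 i * (down n (i - 1) 1 * up n 1 i)) *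
          ((up n (i + 1) (n - 1) * (down n (n - 1) (i + 1) * σ n i)) *
            (up n (i + 1) (n - 1) * (down n (n - 1) (i + 1) * σ n i))) := by rw [hWW]
  rw [hfact]
  show σ n i * _ = _ * σ n i
  calc σ n i * ((down n (i - 1) 1 * up n 1 i * (down n (i - 1) 1 * up n 1 i)) *
        (up n (i + 1) (n - 1) * down n (n - 1) i *
          (up n (i + 1) (n - 1) * down n (n - 1) i)))
      = (σ n i * (down n (i - 1) 1 * up n 1 i * (down n (i - 1) 1 * up n 1 i))) *
        (up n (i + 1) (n - 1) * down n (n - 1) i *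
          (up n (i + 1) (n - 1) * down n (n - 1) i)) := by group
    _ = ((down n (i - 1) 1 * up n 1 i * (down n (i - 1) 1 * up n 1 i)) * σ n i) *
        (up n (i + 1) (n - 1) * down n (n - 1) i *
          (up n (i + 1) (n - 1) * down n (n - 1) i)) := by rw [hWc]
    _ = (down n (i - 1) 1 * up n 1 i * (down n (i - 1) 1 * up n 1 i)) *
        (σ n i * (up n (i + 1) (n - 1) * down n (n - 1) i *
          (up n (i + 1) (n - 1) * down n (n - 1) i))) := by group
    _ = (down n (i - 1) 1 * up n 1 i * (down n (i - 1) 1 * up n 1 i)) *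
        (up n (i + 1) (n - 1) * down n (n - 1) i *
          (up n (i + 1) (n - 1) * down n (n - 1) i) * σ n i) := by rw [hYc]
    _ = (down n (i - 1) 1 * up n 1 i * (down n (i - 1) 1 * up n 1 i)) *
        (up n (i + 1) (n - 1) * down n (n - 1) i *
          (up n (i + 1) (n - 1) * down n (n - 1) i)) * σ n i := by group

end Aux

/-- Lemma 1: the subgroup `R_n` of `B_n` generated by the full twist `d` and the flips
`r_1, …, r_n` is normal in `B_n`. -/
theorem R_normal (n : ℕ) (hn : 2 ≤ n) : (R n).Normal := by
  set S : Set (BraidGroup n) := {fullTwist n} ∪ flip n '' Set.Icc 1 n with hSdef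
  have hRS : R n = Subgroup.closure S := rfl
  -- conjugation stability of the closure
  have conj_mem : ∀ g : BraidGroup n, (∀ s ∈ S, g * s * g⁻¹ ∈ R n) →
      ∀ h, h ∈ R n → g * h * g⁻¹ ∈ R n := by
    intro g hg h hh
    rw [hRS] at hh
    have h3 : (MulAut.conj g).toMonoidHom h ∈
        Subgroup.map (MulAut.conj g).toMonoidHom (Subgroup.closure S) :=
      Subgroup.mem_map_of_mem _ hh
    rw [MonoidHom.map_closure] at h3
    have h4 : Subgroup.closure ((MulAut.conj g).toMonoidHom '' S) ≤ R n := by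
      apply (Subgroup.closure_le _).mpr
      rintro y ⟨s, hs, rfl⟩
      simpa using hg s hs
    have h5 := h4 h3
    simpa using h5
  -- membership helpers
  have dR : fullTwist n ∈ R n := by
    rw [hRS]; exact Subgroup.subset_closure (Set.mem_union_left _ rfl)
  have fR : ∀ i, 1 ≤ i → i ≤ n → flip n i ∈ R n := by
    intro i hi1 hi2
    rw [hRS]
    exact Subgroup.subset_closure (Set.mem_union_right _ ⟨i, ⟨hi1, hi2⟩, rfl⟩)
  -- the crucial conjugation computations for a generator σ_j, 1 ≤ j ≤ n-1
  have key : ∀ j, 1 ≤ j → j ≤ n - 1 → ∀ s ∈ S,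
      σ n j * s * (σ n j)⁻¹ ∈ R n ∧ (σ n j)⁻¹ * s * σ n j ∈ R n := by
    intro j hj1 hj2 s hs
    rcases hs with hs | ⟨i, ⟨hi1, hi2⟩, rfl⟩
    · -- the full twist is central
      rw [Set.mem_singleton_iff] at hs
      subst hs
      have hc := d_comm_sigma (n - 1 - j) j hj1 hj2 rfl
      constructor
      · have he : σ n j * fullTwist n * (σ n j)⁻¹ = fullTwist n := by rw [hc]; group
        rw [he]; exact dR
      · have he : (σ n j)⁻¹ * fullTwist n * σ n j = fullTwist n := by
          rw [mul_assoc, ← hc]; group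
        rw [he]; exact dR
    · -- flips
      rcases (by omega : j + 2 ≤ i ∨ i + 1 ≤ j ∨ i = j ∨ i = j + 1) with hc | hc | hc | hc
      · have hcomm := flip_comm_low hj1 hc hi2
        constructor
        · have he : σ n j * flip n i * (σ n j)⁻¹ = flip n i := by rw [hcomm.eq]; group
          rw [he]; exact fR i hi1 hi2
        · have he : (σ n j)⁻¹ * flip n i * σ n j = flip n i := by rw [mul_assoc, ← hcomm.eq]; group
          rw [he]; exact fR i hi1 hi2
      · have hcomm := flip_comm_high hi1 hc hj2
        constructor
        · have he : σ n j * flip n i * (σ n j)⁻¹ = flip n i := by rw [hcomm.eq]; group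
          rw [he]; exact fR i hi1 hi2
        · have he : (σ n j)⁻¹ * flip n i * σ n j = flip n i := by rw [mul_assoc, ← hcomm.eq]; group
          rw [he]; exact fR i hi1 hi2
      · -- i = j : conjugate is r_{i+1}, inverse conjugate is r_i⁻¹ r_{i+1} r_i
        subst hc
        have hsucc := flip_succ hj1 hj2
        have hmc := flip_mul_comm hj1 hj2
        constructor
        · have he : σ n i * flip n i * (σ n i)⁻¹ = flip n (i + 1) := by rw [hsucc]; group
          rw [he]; exact fR (i + 1) (by omega) (by omega)
        · have he1 : (σ n i)⁻¹ * flip n (i + 1) * σ n i = flip n i := by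
            rw [mul_assoc, ← hsucc]; group
          have he2 : (σ n i)⁻¹ * (flip n (i + 1) * flip n i) * σ n i =
              flip n (i + 1) * flip n i := by rw [mul_assoc, ← hmc.eq]; group
          have he3 : (σ n i)⁻¹ * flip n i * σ n i =
              (flip n i)⁻¹ * (flip n (i + 1) * flip n i) := by
            calc (σ n i)⁻¹ * flip n i * σ n i
                = ((σ n i)⁻¹ * flip n (i + 1) * σ n i)⁻¹ *
                  ((σ n i)⁻¹ * (flip n (i + 1) * flip n i) * σ n i) := by group
              _ = (flip n i)⁻¹ * (flip n (i + 1) * flip n i) := by rw [he1, he2]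
          rw [he3]
          exact mul_mem (inv_mem (fR i hi1 hi2))
            (mul_mem (fR (i + 1) (by omega) (by omega)) (fR i hi1 hi2))
      · -- i = j + 1 : conjugate is r_{j+1} r_j r_{j+1}⁻¹, inverse conjugate is r_j
        subst hc
        have hsucc := flip_succ hj1 hj2
        have hmc := flip_mul_comm hj1 hj2
        constructor
        · have he1 : σ n j * flip n j * (σ n j)⁻¹ = flip n (j + 1) := by rw [hsucc]; group
          have he2 : σ n j * (flip n (j + 1) * flip n j) * (σ n j)⁻¹ =
              flip n (j + 1) * flip n j := by rw [hmc.eq]; group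
          have he3 : σ n j * flip n (j + 1) * (σ n j)⁻¹ =
              (flip n (j + 1) * flip n j) * (flip n (j + 1))⁻¹ := by
            calc σ n j * flip n (j + 1) * (σ n j)⁻¹
                = (σ n j * (flip n (j + 1) * flip n j) * (σ n j)⁻¹) *
                  (σ n j * flip n j * (σ n j)⁻¹)⁻¹ := by group
              _ = (flip n (j + 1) * flip n j) * (flip n (j + 1))⁻¹ := by rw [he1, he2]
          rw [he3]
          exact mul_mem (mul_mem (fR (j + 1) (by omega) (by omega)) (fR j hj1 (by omega)))
            (inv_mem (fR (j + 1) (by omega) (by omega)))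
        · have he1 : (σ n j)⁻¹ * flip n (j + 1) * σ n j = flip n j := by
            rw [mul_assoc, ← hsucc]; group
          rw [he1]; exact fR j hj1 (by omega)
  -- each generator lies in the normalizer
  have hgen : ∀ x : Fin (n - 1),
      (PresentedGroup.of x : BraidGroup n) ∈ Subgroup.normalizer (R n : Set (BraidGroup n)) := by
    intro x
    have hx : (PresentedGroup.of x : BraidGroup n) = σ n (x.val + 1) := by
      rw [show σ n (x.val + 1) = (PresentedGroup.of ⟨x.val + 1 - 1, by have := x.isLt; omega⟩ :
          BraidGroup n) from dif_pos ⟨by omega, by have := x.isLt; omega⟩]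
      congr 1
    have hj1 : 1 ≤ x.val + 1 := by omega
    have hj2 : x.val + 1 ≤ n - 1 := by have := x.isLt; omega
    refine (Subgroup.mem_normalizer_iff (G := BraidGroup n)).mpr ?_
    intro h
    constructor
    · intro hh
      rw [hx]
      exact conj_mem (σ n (x.val + 1)) (fun s hs => (key _ hj1 hj2 s hs).1) h hh
    · intro hh
      rw [hx] at hh
      have h6 := conj_mem (σ n (x.val + 1))⁻¹
        (fun s hs => by simpa using (key _ hj1 hj2 s hs).2) _ hh
      rwa [show (σ n (x.val + 1))⁻¹ * (σ n (x.val + 1) * h * (σ n (x.val + 1))⁻¹) *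
        (σ n (x.val + 1))⁻¹⁻¹ = h by group] at h6
  have htop : Subgroup.normalizer (R n : Set (BraidGroup n)) = ⊤ := by
    rw [eq_top_iff]
    have h8 : Subgroup.closure (Set.range (PresentedGroup.of : Fin (n - 1) → BraidGroup n)) =
        (⊤ : Subgroup (BraidGroup n)) := PresentedGroup.closure_range_of _
    rw [← h8]
    apply (Subgroup.closure_le _).mpr
    rintro _ ⟨x, rfl⟩
    exact hgen x
  exact Subgroup.normalizer_eq_top_iff.mp htop

end Braid
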